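/- (IP-EOS formula for E.) Let (ρ_L, p_L), (ρ_R, p_R) be pairs of positive reals with ρ_L/p_L ≠ ρ_R/p_R. For K ∈ {L,R} set θ_K = p_K/ρ_K, z₂,K = ρ_K/p_K, h_K = 2θ_K + √(1+4θ_K²), S_K = −ln ρ_K + ln θ_K + 2 ln(2θ_K + √(1+4θ_K²)), and W₁,K = z₂,K h_K − S_K. Write {{a}} = (a_L+a_R)/2 for arithmetic means of quantities derived from z₂, and {{a}}_ln for logarithmic means. Then E := (W₁,R − W₁,L − (ln ρ_R − ln ρ_L))/(z₂,R − z₂,L) = 1/{{z₂}}_ln + {{√(1+4/z₂²)}} − ({{2/z₂}}/{{z₂}})·( {{z₂}}·{{2/z₂}}/{{√(1+4/z₂²)}} − 2(1 + {{2/z₂}}/{{√(1+4/z₂²)}})/{{(2/z₂)+√(1+4/z₂²)}}_ln ), where {{(2/z₂)+√(1+4/z₂²)}}_ln is the logarithmic mean of the two values 2/z₂,K + √(1+4/z₂,K²). -/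

import Mathlib

set_option maxHeartbeats 1000000

private lemma aux10 (x y sL sR tL tR LA LH : ℝ)
    (hx : 0 < x) (hy : 0 < y) (hxy : x ≠ y)
    (htL : x * tL = 2) (htR : y * tR = 2)
    (hsL : sL ^ 2 = 1 + tL ^ 2) (hsR : sR ^ 2 = 1 + tR ^ 2)
    (hsL0 : 0 < sL) (hsR0 : 0 < sR) :
    (y * sR - x * sL + LA - 2 * LH) / (y - x)
      = 1 / ((y - x) / LA) + (sL + sR) / 2
        - ((2 / x + 2 / y) / 2) / ((x + y) / 2)
          * ((x + y) / 2 * ((2 / x + 2 / y) / 2) / ((sL + sR) / 2)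
            - 2 * (1 + ((2 / x + 2 / y) / 2) / ((sL + sR) / 2))
              / ((2 / y + sR - (2 / x + sL)) / LH)) := by
  have hd : y - x ≠ 0 := sub_ne_zero.mpr (Ne.symm hxy)
  have hS : sL + sR ≠ 0 := by positivity
  have hZ : x + y ≠ 0 := by positivity
  have etL : 2 / x = tL := by field_simp [hx.ne']; linarith
  have etR : 2 / y = tR := by field_simp [hy.ne']; linarith
  have htL0 : 0 < tL := etL ▸ (by positivity)
  have htR0 : 0 < tR := etR ▸ (by positivity)
  rw [etL, etR]
  have lem_scalar : (tR - tL) * (x + y) = (x - y) * (tL + tR) := by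
    linear_combination 2 * htR - 2 * htL
  have lem_s : (sR - sL) * (sL + sR) = (tR - tL) * (tR + tL) := by
    linear_combination hsR - hsL
  have key2 : (tR + sR - (tL + sL)) * (x + y) * (sL + sR)
      = (x - y) * (tL + tR) * (sL + sR + (tL + tR)) := by
    linear_combination (sL + sR) * lem_scalar + (x + y) * lem_s + (tR + tL) * lem_scalar
  have key1 : (y * sR - x * sL) * (sL + sR) = (y - x) * (1 + sL * sR - tL * tR) := by
    linear_combination y * hsR - x * hsL + (tR + tL) * htR - (tL + tR) * htL
  have hΔ : 2 / y + sR - (2 / x + sL) ≠ 0 := by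
    rw [etL, etR]
    intro h
    have hrhs : (x - y) * (tL + tR) * (sL + sR + (tL + tR)) ≠ 0 := by
      apply mul_ne_zero (mul_ne_zero (sub_ne_zero.mpr hxy) (by positivity)) (by positivity)
    exact hrhs (by rw [← key2, h, zero_mul, zero_mul])
  rw [etL, etR] at hΔ
  rw [one_div_div, div_div_eq_mul_div]
  field_simp
  linear_combination (2 * (x + y) * (tR + sR - (tL + sL))) * key1
    + (-4 * LH) * key2
    + (-(y - x) * (x + y) * (tR + sR - (tL + sL))) * (hsL + hsR)



/-- The explicit formula for `E = ([W₁] − [ln z₁])/[z₂]` for the IP-EOS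
`h(θ) = 2θ + √(1+4θ²)`, `S = −ln ρ + ln θ + 2 ln(2θ + √(1+4θ²))`. -/
theorem stmt10 (ρL pL ρR pR : ℝ)
    (hρL : 0 < ρL) (hpL : 0 < pL) (hρR : 0 < ρR) (hpR : 0 < pR)
    (hne : ρL / pL ≠ ρR / pR) :
    let z2L : ℝ := ρL / pL
    let z2R : ℝ := ρR / pR
    let θL : ℝ := pL / ρL
    let θR : ℝ := pR / ρR
    let hL : ℝ := 2 * θL + Real.sqrt (1 + 4 * θL ^ 2)
    let hR : ℝ := 2 * θR + Real.sqrt (1 + 4 * θR ^ 2)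
    let SL : ℝ := -Real.log ρL + Real.log θL
      + 2 * Real.log (2 * θL + Real.sqrt (1 + 4 * θL ^ 2))
    let SR : ℝ := -Real.log ρR + Real.log θR
      + 2 * Real.log (2 * θR + Real.sqrt (1 + 4 * θR ^ 2))
    let W1L : ℝ := z2L * hL - SL
    let W1R : ℝ := z2R * hR - SR
    let lz2 : ℝ := (z2R - z2L) / (Real.log z2R - Real.log z2L)
    let aSq : ℝ := (Real.sqrt (1 + 4 / z2L ^ 2) + Real.sqrt (1 + 4 / z2R ^ 2)) / 2
    let aInv : ℝ := (2 / z2L + 2 / z2R) / 2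
    let az2 : ℝ := (z2L + z2R) / 2
    let lu : ℝ := ((2 / z2R + Real.sqrt (1 + 4 / z2R ^ 2))
        - (2 / z2L + Real.sqrt (1 + 4 / z2L ^ 2)))
      / (Real.log (2 / z2R + Real.sqrt (1 + 4 / z2R ^ 2))
        - Real.log (2 / z2L + Real.sqrt (1 + 4 / z2L ^ 2)))
    (W1R - W1L - (Real.log ρR - Real.log ρL)) / (z2R - z2L)
      = 1 / lz2 + aSq - (aInv / az2) * (az2 * aInv / aSq - 2 * (1 + aInv / aSq) / lu) := by
  intro x y θL θR eL eR SL SR W1L W1R lz2 aSq aInv az2 lu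
  have hx : 0 < x := div_pos hρL hpL
  have hy : 0 < y := div_pos hρR hpR
  have hxy : x ≠ y := hne
  set sL : ℝ := Real.sqrt (1 + 4 / x ^ 2) with hsLdef
  set sR : ℝ := Real.sqrt (1 + 4 / y ^ 2) with hsRdef
  have hθLx : θL = 1 / x := (one_div_div ρL pL).symm
  have hθRy : θR = 1 / y := (one_div_div ρR pR).symm
  have esL : Real.sqrt (1 + 4 * θL ^ 2) = sL := by
    rw [hθLx, hsLdef]; congr 1; ring
  have esR : Real.sqrt (1 + 4 * θR ^ 2) = sR := by
    rw [hθRy, hsRdef]; congr 1; ring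
  have heL : eL = 2 / x + sL := by
    show 2 * θL + Real.sqrt (1 + 4 * θL ^ 2) = _
    rw [esL, hθLx]; ring
  have heR : eR = 2 / y + sR := by
    show 2 * θR + Real.sqrt (1 + 4 * θR ^ 2) = _
    rw [esR, hθRy]; ring
  have hSL : SL = -Real.log ρL + Real.log θL + 2 * Real.log eL := rfl
  have hSR : SR = -Real.log ρR + Real.log θR + 2 * Real.log eR := rfl
  have hlogθL : Real.log θL = -Real.log x := by rw [hθLx, one_div, Real.log_inv]
  have hlogθR : Real.log θR = -Real.log y := by rw [hθRy, one_div, Real.log_inv]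
  have hW1L : W1L = 2 + x * sL + Real.log ρL + Real.log x
      - 2 * Real.log (2 / x + sL) := by
    show x * eL - SL = _
    rw [hSL, heL, hlogθL]
    field_simp
    ring
  have hW1R : W1R = 2 + y * sR + Real.log ρR + Real.log y
      - 2 * Real.log (2 / y + sR) := by
    show y * eR - SR = _
    rw [hSR, heR, hlogθR]
    field_simp
    ring
  have hnum : W1R - W1L - (Real.log ρR - Real.log ρL)
      = y * sR - x * sL + (Real.log y - Real.log x)
        - 2 * (Real.log (2 / y + sR) - Real.log (2 / x + sL)) := by
    rw [hW1L, hW1R]; ring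
  have hlz2 : lz2 = (y - x) / (Real.log y - Real.log x) := rfl
  have haSq : aSq = (sL + sR) / 2 := rfl
  have haInv : aInv = (2 / x + 2 / y) / 2 := rfl
  have haz2 : az2 = (x + y) / 2 := rfl
  have hlu : lu = (2 / y + sR - (2 / x + sL))
      / (Real.log (2 / y + sR) - Real.log (2 / x + sL)) := rfl
  rw [hnum, hlz2, haSq, haInv, haz2, hlu]
  have h4x : (0:ℝ) < 1 + 4 / x ^ 2 := by positivity
  have h4y : (0:ℝ) < 1 + 4 / y ^ 2 := by positivity
  exact aux10 x y sL sR (2 / x) (2 / y) (Real.log y - Real.log x)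
    (Real.log (2 / y + sR) - Real.log (2 / x + sL)) hx hy hxy
    (by field_simp) (by field_simp)
    (by rw [hsLdef, Real.sq_sqrt h4x.le]; ring)
    (by rw [hsRdef, Real.sq_sqrt h4y.le]; ring)
    (Real.sqrt_pos.mpr h4x) (Real.sqrt_pos.mpr h4y)
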